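/- Suppose x_1,…,x_N are pairwise disjointly supported finitely supported real sequences and let a_k = max supp x_k for each k. Then ‖Σ_{k=1}^N x_k‖_T ≤ 4 ‖Σ_{k=1}^N ‖x_k‖_T e_{a_k}‖_T^#, where e_a denotes the a-th coordinate vector. -/

import Mathlib

open Function Filter
open scoped BigOperators ENNReal

noncomputable section

namespace CK

/-- The formal (finite-support) linear combination `∑ᶠ i, a i • e i`. -/
def vecSum {X : Type*} [NormedAddCommGroup X] [NormedSpace ℝ X] (e : ℕ → X) (a : ℕ → ℝ) : X :=
  ∑ᶠ i, a i • e i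

/-- `u` is an unconditional basis of `X`: every vector has a unique unconditional
(i.e. unordered, in the sense of `HasSum`) expansion along `u`. -/
def IsUnconditionalBasis {ι : Type*} {X : Type*} [NormedAddCommGroup X] [NormedSpace ℝ X]
    (u : ι → X) : Prop :=
  ∀ x : X, ∃! a : ι → ℝ, HasSum (fun i => a i • u i) x

/-- Two systems of vectors are equivalent: the formal identity between finite linear
combinations is bounded both ways (hence extends to an isomorphism of closed spans). -/
def BasisEquiv {ι : Type*} {X Y : Type*} [NormedAddCommGroup X] [NormedSpace ℝ X]
    [NormedAddCommGroup Y] [NormedSpace ℝ Y] (u : ι → X) (v : ι → Y) : Prop :=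
  ∃ c C : ℝ, 0 < c ∧ ∀ (a : ι → ℝ) (s : Finset ι),
    c * ‖∑ i ∈ s, a i • u i‖ ≤ ‖∑ i ∈ s, a i • v i‖ ∧
      ‖∑ i ∈ s, a i • v i‖ ≤ C * ‖∑ i ∈ s, a i • u i‖

/-- Permutative equivalence of two systems of vectors. -/
def PermutativelyEquiv {ι : Type*} {X Y : Type*} [NormedAddCommGroup X] [NormedSpace ℝ X]
    [NormedAddCommGroup Y] [NormedSpace ℝ Y] (u : ι → X) (v : ι → Y) : Prop :=
  ∃ π : Equiv.Perm ι, BasisEquiv u (fun i => v (π i))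

/-- `X` has a unique unconditional basis: any two normalized unconditional bases are
permutatively equivalent. -/
def HasUniqueUnconditionalBasis (X : Type*) [NormedAddCommGroup X] [NormedSpace ℝ X] : Prop :=
  ∀ u v : ℕ → X, IsUnconditionalBasis u → IsUnconditionalBasis v →
    (∀ n, ‖u n‖ = 1) → (∀ n, ‖v n‖ = 1) → PermutativelyEquiv u v

/-- The closed linear span of a sequence. -/
def spanCl {X : Type*} [NormedAddCommGroup X] [NormedSpace ℝ X] (u : ℕ → X) : Submodule ℝ X :=
  (Submodule.span ℝ (Set.range u)).topologicalClosure

/-- The members of a sequence, as elements of their closed linear span. -/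
def inSpanCl {X : Type*} [NormedAddCommGroup X] [NormedSpace ℝ X] (u : ℕ → X) (n : ℕ) :
    ↥(spanCl u) :=
  ⟨u n, (Submodule.span ℝ (Set.range u)).le_topologicalClosure (Submodule.subset_span ⟨n, rfl⟩)⟩

/-- `u` is an unconditional basic sequence: it is an unconditional basis of its closed span. -/
def IsUncondBasicSeq {X : Type*} [NormedAddCommGroup X] [NormedSpace ℝ X] (u : ℕ → X) : Prop :=
  IsUnconditionalBasis (inSpanCl u)

/-- The closed span of `u` is the range of a bounded linear projection. -/
def IsComplementedSeq {X : Type*} [NormedAddCommGroup X] [NormedSpace ℝ X] (u : ℕ → X) : Prop :=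
  ∃ P : X →L[ℝ] X, P.comp P = P ∧ LinearMap.range (P : X →ₗ[ℝ] X) = spanCl u

/-- A finite linear combination of the `f j`, as an element of the closed span. -/
def spanElt {X : Type*} [NormedAddCommGroup X] [NormedSpace ℝ X] (f : ℕ → X) (a : ℕ → ℝ)
    (s : Finset ℕ) : ↥(spanCl f) :=
  ⟨∑ j ∈ s, a j • f j, by
    apply (Submodule.span ℝ (Set.range f)).le_topologicalClosure
    exact Submodule.sum_mem _ fun j _ => Submodule.smul_mem _ _ (Submodule.subset_span ⟨j, rfl⟩)⟩

/-- The lattice (in the coordinatewise order induced by the basic sequence `f`) given by the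
closed span of `f` is sufficiently lattice Euclidean: uniformly complemented lattice copies of
`ℓ₂ⁿ`, the projections being realized by operators `S, T` with `S ∘ T = id`, `‖S‖‖T‖ ≤ M` and
`S` a lattice homomorphism (expressed coordinatewise on finite combinations of the `f j`). -/
def SuffLatticeEuclideanSeq {X : Type*} [NormedAddCommGroup X] [NormedSpace ℝ X]
    (f : ℕ → X) : Prop :=
  ∃ M : ℝ, ∀ n : ℕ, ∃ (S : ↥(spanCl f) →L[ℝ] EuclideanSpace ℝ (Fin n))
    (T : EuclideanSpace ℝ (Fin n) →L[ℝ] ↥(spanCl f)),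
    (∀ v, S (T v) = v) ∧ ‖S‖ * ‖T‖ ≤ M ∧
    ∀ (a b : ℕ → ℝ) (s : Finset ℕ) (i : Fin n),
      S (spanElt f (fun j => max (a j) (b j)) s) i =
        max (S (spanElt f a s) i) (S (spanElt f b s) i)

/-- The canonical basis of the square `Z ⊕ Z`:
`(u 0, 0), (0, u 0), (u 1, 0), (0, u 1), …`. -/
def squareBasis {X : Type*} [NormedAddCommGroup X] [NormedSpace ℝ X] (u : ℕ → X) : ℕ → X × X :=
  fun k => if Even k then (u (k / 2), 0) else (0, u (k / 2))

/-- The system `e` is left-dominant with constant `γ`. -/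
def LeftDominantWith {X : Type*} [NormedAddCommGroup X] [NormedSpace ℝ X]
    (e : ℕ → X) (γ : ℝ) : Prop :=
  ∀ (n : ℕ) (u v : Fin n → ℕ → ℝ),
    (∀ k, (Function.support (u k)).Finite) → (∀ k, (Function.support (v k)).Finite) →
    (Pairwise fun k l => Disjoint (Function.support (u k)) (Function.support (u l))) →
    (Pairwise fun k l => Disjoint (Function.support (v k)) (Function.support (v l))) →
    (∀ k, ∀ i ∈ Function.support (u k), ∀ j ∈ Function.support (v k), i < j) →
    (∀ k, ‖vecSum e (v k)‖ ≤ ‖vecSum e (u k)‖) →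
    ‖vecSum e (fun i => ∑ k, v k i)‖ ≤ γ * ‖vecSum e (fun i => ∑ k, u k i)‖

/-- The system `e` is right-dominant with constant `γ`. -/
def RightDominantWith {X : Type*} [NormedAddCommGroup X] [NormedSpace ℝ X]
    (e : ℕ → X) (γ : ℝ) : Prop :=
  ∀ (n : ℕ) (u v : Fin n → ℕ → ℝ),
    (∀ k, (Function.support (u k)).Finite) → (∀ k, (Function.support (v k)).Finite) →
    (Pairwise fun k l => Disjoint (Function.support (u k)) (Function.support (u l))) →
    (Pairwise fun k l => Disjoint (Function.support (v k)) (Function.support (v l))) →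
    (∀ k, ∀ i ∈ Function.support (u k), ∀ j ∈ Function.support (v k), i < j) →
    (∀ k, ‖vecSum e (u k)‖ ≤ ‖vecSum e (v k)‖) →
    ‖vecSum e (fun i => ∑ k, u k i)‖ ≤ γ * ‖vecSum e (fun i => ∑ k, v k i)‖

def IsLeftDominant {X : Type*} [NormedAddCommGroup X] [NormedSpace ℝ X] (e : ℕ → X) : Prop :=
  ∃ γ : ℝ, 1 ≤ γ ∧ LeftDominantWith e γ

def IsRightDominant {X : Type*} [NormedAddCommGroup X] [NormedSpace ℝ X] (e : ℕ → X) : Prop :=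
  ∃ γ : ℝ, 1 ≤ γ ∧ RightDominantWith e γ

/-- The norm of the unit vector basis of `ℓ_p^n` (`p = ∞` giving the sup norm). -/
def lpNormFin (p : ℝ≥0∞) {n : ℕ} (c : Fin n → ℝ) : ℝ :=
  if p = ⊤ then ⨆ k, |c k| else (∑ k, |c k| ^ p.toReal) ^ (1 / p.toReal)

/-- `ℓ_p` is disjointly finitely representable in the sequence space spanned by `e`. -/
def DisjointlyFinitelyRepresentable (p : ℝ≥0∞) {X : Type*} [NormedAddCommGroup X]
    [NormedSpace ℝ X] (e : ℕ → X) : Prop :=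
  ∀ (n : ℕ) (ε : ℝ), 0 < ε → ∃ a : Fin n → ℕ → ℝ,
    (∀ k, (Function.support (a k)).Finite) ∧
    (Pairwise fun k l => Disjoint (Function.support (a k)) (Function.support (a l))) ∧
    ∀ c : Fin n → ℝ,
      (1 + ε)⁻¹ * lpNormFin p c ≤ ‖vecSum e fun i => ∑ k, c k * a k i‖ ∧
      ‖vecSum e fun i => ∑ k, c k * a k i‖ ≤ (1 + ε) * lpNormFin p c

/-- `X` is sufficiently Euclidean: `ℓ₂ⁿ`'s are uniformly complementably representable in `X`. -/
def SufficientlyEuclidean (X : Type*) [NormedAddCommGroup X] [NormedSpace ℝ X] : Prop :=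
  ∃ M : ℝ, ∀ n : ℕ, ∃ (S : X →L[ℝ] EuclideanSpace ℝ (Fin n))
    (T : EuclideanSpace ℝ (Fin n) →L[ℝ] X), (∀ v, S (T v) = v) ∧ ‖S‖ * ‖T‖ ≤ M

/-- Left dominance for an extended-real-valued Köthe norm on sequences. -/
def ENormLeftDominant (N : (ℕ → ℝ) → ℝ≥0∞) (γ : ℝ) : Prop :=
  ∀ (n : ℕ) (u v : Fin n → ℕ → ℝ),
    (∀ k, (Function.support (u k)).Finite) → (∀ k, (Function.support (v k)).Finite) →
    (Pairwise fun k l => Disjoint (Function.support (u k)) (Function.support (u l))) →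
    (Pairwise fun k l => Disjoint (Function.support (v k)) (Function.support (v l))) →
    (∀ k, ∀ i ∈ Function.support (u k), ∀ j ∈ Function.support (v k), i < j) →
    (∀ k, N (v k) ≤ N (u k)) →
    N (fun i => ∑ k, v k i) ≤ ENNReal.ofReal γ * N (fun i => ∑ k, u k i)

/-- Right dominance for an extended-real-valued Köthe norm on sequences. -/
def ENormRightDominant (N : (ℕ → ℝ) → ℝ≥0∞) (γ : ℝ) : Prop :=
  ∀ (n : ℕ) (u v : Fin n → ℕ → ℝ),
    (∀ k, (Function.support (u k)).Finite) → (∀ k, (Function.support (v k)).Finite) →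
    (Pairwise fun k l => Disjoint (Function.support (u k)) (Function.support (u l))) →
    (Pairwise fun k l => Disjoint (Function.support (v k)) (Function.support (v l))) →
    (∀ k, ∀ i ∈ Function.support (u k), ∀ j ∈ Function.support (v k), i < j) →
    (∀ k, N (u k) ≤ N (v k)) →
    N (fun i => ∑ k, u k i) ≤ ENNReal.ofReal γ * N (fun i => ∑ k, v k i)

/-- The Köthe dual norm: `‖f‖_{X*} = sup { Σ |f n g n| : ‖g‖_X ≤ 1 }`. -/
def kotheDual (N : (ℕ → ℝ) → ℝ≥0∞) : (ℕ → ℝ) → ℝ≥0∞ :=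
  fun f => ⨆ g : {g : ℕ → ℝ // N g ≤ 1}, ∑' n, ENNReal.ofReal |f n * (g : ℕ → ℝ) n|

/-- The Nakano norm of a finitely supported sequence. -/
def nakanoNormFin (p : ℕ → ℝ) (s : Finset ℕ) (a : ℕ → ℝ) : ℝ :=
  sInf {lam : ℝ | 0 < lam ∧ ∑ i ∈ s, (|a i| / lam) ^ (p i) ≤ 1}

/-- The Orlicz (Luxemburg) norm of a finitely supported sequence. -/
def orliczNormFin (F : ℝ → ℝ) (s : Finset ℕ) (a : ℕ → ℝ) : ℝ :=
  sInf {lam : ℝ | 0 < lam ∧ ∑ i ∈ s, F (|a i| / lam) ≤ 1}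

/-- The Orlicz function `F(t) ∼ t |log t|^{-a}`:
`F(t) = t^{1+a}` for `e⁻¹ ≤ t ≤ 1` and `F(t) = e^{-a} t |log t|^{-a}` for `0 < t ≤ e⁻¹`. -/
def Fone (a : ℝ) : ℝ → ℝ := fun t =>
  if t ≤ Real.exp (-1) then Real.exp (-a) * t * |Real.log t| ^ (-a) else t ^ (1 + a)

/-- The Orlicz function `F(t) ∼ t² |log t|⁻¹`:
`F(t) = t³` for `e⁻¹ ≤ t ≤ 1` and `F(t) = e⁻² t² |log t|⁻¹` for `0 < t ≤ e⁻¹`. -/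
def Ftwo : ℝ → ℝ := fun t =>
  if t ≤ Real.exp (-1) then Real.exp (-2) * t ^ (2 : ℕ) * |Real.log t|⁻¹ else t ^ (3 : ℕ)

/-- A norm on `c₀₀ = ℕ →₀ ℝ` satisfying the defining inequalities of the Tsirelson norm. -/
def IsTsiCandidate (N : (ℕ →₀ ℝ) → ℝ) : Prop :=
  (∀ x, 0 ≤ N x) ∧ (∀ (c : ℝ) (x), N (c • x) = |c| * N x) ∧
  (∀ x y, N (x + y) ≤ N x + N y) ∧
  (∀ x, ∀ i : ℕ, |x i| ≤ N x) ∧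
  (∀ (n : ℕ) (xs : Fin n → (ℕ →₀ ℝ)),
    (∀ j k : Fin n, j < k → ∀ i ∈ (xs j).support, ∀ i' ∈ (xs k).support, i < i') →
    (∀ j : Fin n, ∀ i ∈ (xs j).support, n ≤ i) →
    (1 / 2 : ℝ) * ∑ j, N (xs j) ≤ N (∑ j, xs j))

/-- The Tsirelson norm: the minimal norm on `c₀₀` dominating the sup norm and satisfying
`(1/2) Σ ‖x_j‖ ≤ ‖Σ x_j‖` for successive vectors `n ≤ supp x₁ < ⋯ < supp x_n`. -/
def IsTsirelsonNorm (N : (ℕ →₀ ℝ) → ℝ) : Prop :=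
  IsTsiCandidate N ∧ ∀ N', IsTsiCandidate N' → ∀ x, N x ≤ N' x

/-- A norm on `c₀₀` satisfying the defining inequalities of the disjoint-version Tsirelson
norm `‖·‖_T^#`. -/
def IsTsiSharpCandidate (N : (ℕ →₀ ℝ) → ℝ) : Prop :=
  (∀ x, 0 ≤ N x) ∧ (∀ (c : ℝ) (x), N (c • x) = |c| * N x) ∧
  (∀ x y, N (x + y) ≤ N x + N y) ∧
  (∀ x, ∀ i : ℕ, |x i| ≤ N x) ∧
  (∀ (n : ℕ) (xs : Fin (2 * n) → (ℕ →₀ ℝ)),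
    (Pairwise fun j k => Disjoint (xs j).support (xs k).support) →
    (∀ j, ∀ i ∈ (xs j).support, n ≤ i) →
    (1 / 2 : ℝ) * ∑ j, N (xs j) ≤ N (∑ j, xs j))

/-- The norm `‖·‖_T^#`: the least norm on `c₀₀` dominating the sup norm and satisfying
`(1/2) Σ_{j=1}^{2n} ‖x_j‖ ≤ ‖Σ x_j‖` for `2n` disjointly supported vectors with
`min supp x_j ≥ n`. -/
def IsTsirelsonSharpNorm (N : (ℕ →₀ ℝ) → ℝ) : Prop :=
  IsTsiSharpCandidate N ∧ ∀ N', IsTsiSharpCandidate N' → ∀ x, N x ≤ N' x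

open scoped Classical in
/-- `V(A)`: the set of `j` such that for some `i ∈ A` and some `k`, `(i,k) ∈ G` and
`(j,k) ∈ G`. -/
def Vstep (n : ℕ) (G : Finset (Fin n × Fin n)) (A : Finset (Fin n)) : Finset (Fin n) :=
  Finset.univ.filter fun j => ∃ i ∈ A, ∃ k, (i, k) ∈ G ∧ (j, k) ∈ G

open scoped Classical in
/-- `G^r`: the set of pairs `(i,j)` such that `(k,j) ∈ G` for some `k ∈ V^r({i})`. -/
def Gpow (n : ℕ) (G : Finset (Fin n × Fin n)) (r : ℕ) : Finset (Fin n × Fin n) :=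
  Finset.univ.filter fun p => ∃ k, (k, p.2) ∈ G ∧ k ∈ (Vstep n G)^[r] {p.1}

/-- A family of finite-dimensional sequence spaces (given by normalized monotone bases `b i`)
is sufficiently lattice Euclidean. -/
def SuffLatticeEuclideanFam {ι : Type*} {E : ι → Type*} [∀ i, NormedAddCommGroup (E i)]
    [∀ i, NormedSpace ℝ (E i)] {n : ι → ℕ} (b : ∀ i, Fin (n i) → E i) : Prop :=
  ∃ M : ℝ, ∀ m : ℕ, ∃ i : ι, ∃ (S : E i →L[ℝ] EuclideanSpace ℝ (Fin m))
    (T : EuclideanSpace ℝ (Fin m) →L[ℝ] E i),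
    (∀ v, S (T v) = v) ∧ ‖S‖ * ‖T‖ ≤ M ∧
    ∀ (a c : Fin (n i) → ℝ) (k : Fin m),
      S (∑ j, max (a j) (c j) • b i j) k =
        max (S (∑ j, a j • b i j) k) (S (∑ j, c j • b i j) k)

end CK

namespace CK

/-! ### Auxiliary development -/

section Aux

lemma tsi_zero {N : (ℕ →₀ ℝ) → ℝ} (h : ∀ (c : ℝ) (x), N (c • x) = |c| * N x) : N 0 = 0 := by
  have := h 0 0
  simpa using this

/-- Flip the sign of coordinate `i`. -/
noncomputable def flip (i : ℕ) (y : ℕ →₀ ℝ) : ℕ →₀ ℝ := y - Finsupp.single i (2 * y i)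

lemma flip_apply (i j : ℕ) (y : ℕ →₀ ℝ) : flip i y j = if j = i then -(y j) else y j := by
  simp only [flip, Finsupp.sub_apply, Finsupp.single_apply]
  by_cases h : j = i
  · subst h; rw [if_pos rfl, if_pos rfl]; ring
  · rw [if_neg (fun hh : i = j => h hh.symm), if_neg h]; ring1

lemma flip_abs (i j : ℕ) (y : ℕ →₀ ℝ) : |flip i y j| = |y j| := by
  rw [flip_apply]; split <;> simp

lemma flip_support (i : ℕ) (y : ℕ →₀ ℝ) : (flip i y).support = y.support := by
  ext j
  simp only [Finsupp.mem_support_iff]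
  rw [flip_apply]
  split <;> simp

lemma flip_add (i : ℕ) (y z : ℕ →₀ ℝ) : flip i (y + z) = flip i y + flip i z := by
  ext j
  rw [Finsupp.add_apply, flip_apply, flip_apply, flip_apply, Finsupp.add_apply]
  split <;> ring

lemma flip_smul (i : ℕ) (c : ℝ) (y : ℕ →₀ ℝ) : flip i (c • y) = c • flip i y := by
  ext j
  rw [Finsupp.smul_apply, flip_apply, flip_apply, Finsupp.smul_apply]
  split <;> simp <;> ring

lemma flip_flip (i : ℕ) (y : ℕ →₀ ℝ) : flip i (flip i y) = y := by
  ext j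
  rw [flip_apply, flip_apply]
  split <;> simp

lemma flip_sum {α : Type*} (i : ℕ) (s : Finset α) (f : α → (ℕ →₀ ℝ)) :
    flip i (∑ k ∈ s, f k) = ∑ k ∈ s, flip i (f k) := by
  classical
  induction s using Finset.induction_on with
  | empty => ext j; rw [Finset.sum_empty, Finset.sum_empty, flip_apply]; split <;> simp
  | @insert k s' hk ih => rw [Finset.sum_insert hk, Finset.sum_insert hk, flip_add, ih]

/-- The sharp candidates are closed under sign flips. -/
lemma sharp_cand_flip {Ns : (ℕ →₀ ℝ) → ℝ} (h : IsTsiSharpCandidate Ns) (i : ℕ) :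
    IsTsiSharpCandidate (fun y => Ns (flip i y)) := by
  obtain ⟨h0, h1, h2, h3, h4⟩ := h
  refine ⟨fun x => h0 _, ?_, ?_, ?_, ?_⟩
  · intro c x
    have h := h1 c (flip i x); rw [← flip_smul] at h; exact h
  · intro x y
    have h := h2 (flip i x) (flip i y); rw [← flip_add] at h; exact h
  · intro x j
    have h := h3 (flip i x) j; rwa [flip_abs] at h
  intro n xs hd hs
  have := h4 n (fun j => flip i (xs j)) ?_ ?_
  · simpa [← flip_sum] using this
  · intro j k hjk
    simpa [flip_support] using hd hjk
  · intro j p hp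
    rw [flip_support] at hp
    exact hs j p hp

/-- The Tsirelson candidates are closed under sign flips. -/
lemma tsi_cand_flip {N : (ℕ →₀ ℝ) → ℝ} (h : IsTsiCandidate N) (i : ℕ) :
    IsTsiCandidate (fun y => N (flip i y)) := by
  obtain ⟨h0, h1, h2, h3, h4⟩ := h
  refine ⟨fun x => h0 _, ?_, ?_, ?_, ?_⟩
  · intro c x
    have h := h1 c (flip i x); rw [← flip_smul] at h; exact h
  · intro x y
    have h := h2 (flip i x) (flip i y); rw [← flip_add] at h; exact h
  · intro x j
    have h := h3 (flip i x) j; rwa [flip_abs] at h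
  intro n xs hd hs
  have := h4 n (fun j => flip i (xs j)) ?_ ?_
  · simpa [← flip_sum] using this
  · intro j k hjk p hp q hq
    rw [flip_support] at hp hq
    exact hd j k hjk p hp q hq
  · intro j p hp
    rw [flip_support] at hp
    exact hs j p hp

lemma sharp_flip_inv {Ns : (ℕ →₀ ℝ) → ℝ} (h : IsTsirelsonSharpNorm Ns) (i : ℕ) (y : ℕ →₀ ℝ) :
    Ns (flip i y) = Ns y := by
  have h1 : ∀ z, Ns z ≤ Ns (flip i z) := fun z => h.2 _ (sharp_cand_flip h.1 i) z
  have h2 := h1 (flip i y)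
  rw [flip_flip] at h2
  exact le_antisymm h2 (h1 y)

lemma tsi_flip_inv {N : (ℕ →₀ ℝ) → ℝ} (h : IsTsirelsonNorm N) (i : ℕ) (y : ℕ →₀ ℝ) :
    N (flip i y) = N y := by
  have h1 : ∀ z, N z ≤ N (flip i z) := fun z => h.2 _ (tsi_cand_flip h.1 i) z
  have h2 := h1 (flip i y)
  rw [flip_flip] at h2
  exact le_antisymm h2 (h1 y)

/-- Scaling one coordinate by `μ ∈ [-1,1]` does not increase a flip-invariant norm. -/
lemma upd_le {Nn : (ℕ →₀ ℝ) → ℝ}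
    (hhom : ∀ (c : ℝ) (x), Nn (c • x) = |c| * Nn x)
    (hadd : ∀ x y, Nn (x + y) ≤ Nn x + Nn y)
    (hflip : ∀ i y, Nn (flip i y) = Nn y)
    (i : ℕ) (μ : ℝ) (hμ : |μ| ≤ 1) (y : ℕ →₀ ℝ) :
    Nn (y + Finsupp.single i ((μ - 1) * y i)) ≤ Nn y := by
  have habs := abs_le.mp hμ
  have hid : y + Finsupp.single i ((μ - 1) * y i)
      = ((1 + μ)/2) • y + ((1 - μ)/2) • flip i y := by
    ext j
    rw [Finsupp.add_apply, Finsupp.add_apply, Finsupp.smul_apply, Finsupp.smul_apply,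
      Finsupp.single_apply, flip_apply]
    by_cases h : j = i
    · subst h; rw [if_pos rfl, if_pos rfl]; simp only [smul_eq_mul]; ring
    · rw [if_neg h, if_neg (fun hh : i = j => h hh.symm)]; simp only [smul_eq_mul]; ring
  rw [hid]
  calc Nn (((1 + μ)/2) • y + ((1 - μ)/2) • flip i y)
      ≤ Nn (((1 + μ)/2) • y) + Nn (((1 - μ)/2) • flip i y) := hadd _ _
    _ = ((1 + μ)/2) * Nn y + ((1 - μ)/2) * Nn y := by
        rw [hhom, hhom, hflip, abs_of_nonneg (by linarith), abs_of_nonneg (by linarith)]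
    _ = Nn y := by ring

/-- Monotonicity (unconditionality) of a flip-invariant norm. -/
lemma mono_of_flip {Nn : (ℕ →₀ ℝ) → ℝ}
    (hhom : ∀ (c : ℝ) (x), Nn (c • x) = |c| * Nn x)
    (hadd : ∀ x y, Nn (x + y) ≤ Nn x + Nn y)
    (hflip : ∀ i y, Nn (flip i y) = Nn y) :
    ∀ y z : ℕ →₀ ℝ, (∀ j, |z j| ≤ |y j|) → Nn z ≤ Nn y := by
  classical
  suffices H : ∀ s : Finset ℕ, ∀ y z : ℕ →₀ ℝ,
      (∀ j, |z j| ≤ |y j|) → (∀ j, j ∉ s → z j = y j) → Nn z ≤ Nn y by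
    intro y z h1
    refine H (y.support ∪ z.support) y z h1 ?_
    intro j hj
    rw [Finset.mem_union, not_or, Finsupp.notMem_support_iff, Finsupp.notMem_support_iff] at hj
    rw [hj.1, hj.2]
  intro s
  induction s using Finset.induction_on with
  | empty =>
    intro y z _ h2
    have : z = y := Finsupp.ext fun j => h2 j (Finset.notMem_empty j)
    rw [this]
  | @insert j₀ s' hj₀ ih =>
    intro y z h1 h2
    set μ : ℝ := if y j₀ = 0 then 1 else z j₀ / y j₀ with hμdef
    have hμ : |μ| ≤ 1 := by
      rw [hμdef]
      split
      · simp
      · rename_i hy0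
        rw [abs_div]
        rw [div_le_one (abs_pos.mpr hy0)]
        exact h1 j₀
    set y' := y + Finsupp.single j₀ ((μ - 1) * y j₀) with hy'def
    have hy'j₀ : y' j₀ = z j₀ := by
      rw [hy'def]
      rw [Finsupp.add_apply, Finsupp.single_apply, if_pos rfl, hμdef]
      split
      · rename_i hy0
        have : |z j₀| ≤ 0 := by rw [← abs_zero (α := ℝ), ← hy0]; exact h1 j₀
        have hz0 : z j₀ = 0 := abs_nonpos_iff.mp this
        rw [hy0, hz0]; ring
      · rename_i hy0
        field_simp
        ring
    have hy'ne : ∀ j, j ≠ j₀ → y' j = y j := by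
      intro j hj
      rw [hy'def, Finsupp.add_apply, Finsupp.single_apply, if_neg (fun hh => hj hh.symm), add_zero]
    have step1 : Nn z ≤ Nn y' := by
      refine ih y' z ?_ ?_
      · intro j
        by_cases h : j = j₀
        · subst h; rw [hy'j₀]
        · rw [hy'ne j h]; exact h1 j
      · intro j hj
        by_cases h : j = j₀
        · subst h; rw [hy'j₀]
        · rw [hy'ne j h]
          exact h2 j (by simp [h, hj])
    exact step1.trans (upd_le hhom hadd hflip j₀ μ hμ y)

lemma sharp_mono {Ns : (ℕ →₀ ℝ) → ℝ} (h : IsTsirelsonSharpNorm Ns) :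
    ∀ y z : ℕ →₀ ℝ, (∀ j, |z j| ≤ |y j|) → Ns z ≤ Ns y :=
  mono_of_flip h.1.2.1 h.1.2.2.1 (sharp_flip_inv h)

lemma tsi_mono {N : (ℕ →₀ ℝ) → ℝ} (h : IsTsirelsonNorm N) :
    ∀ y z : ℕ →₀ ℝ, (∀ j, |z j| ≤ |y j|) → N z ≤ N y :=
  mono_of_flip h.1.2.1 h.1.2.2.1 (tsi_flip_inv h)

/-! ### The ℓ¹ norm -/

/-- The ℓ¹ norm on `c₀₀`. -/
noncomputable def l1 (y : ℕ →₀ ℝ) : ℝ := ∑ j ∈ y.support, |y j|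

lemma l1_nonneg (y : ℕ →₀ ℝ) : 0 ≤ l1 y :=
  Finset.sum_nonneg fun j _ => abs_nonneg _

lemma abs_le_l1 (y : ℕ →₀ ℝ) (i : ℕ) : |y i| ≤ l1 y := by
  by_cases h : i ∈ y.support
  · exact Finset.single_le_sum (fun j _ => abs_nonneg (y j)) h
  · rw [Finsupp.notMem_support_iff.mp h, abs_zero]; exact l1_nonneg y

/-! ### Admissible families and the hierarchy K -/

/-- An admissible family of successive sets, all of whose elements are `≥ r`. -/
def Adm (r : ℕ) (E : Fin r → Finset ℕ) : Prop :=
  (∀ i j : Fin r, i < j → ∀ p ∈ E i, ∀ q ∈ E j, p < q) ∧ ∀ i : Fin r, ∀ p ∈ E i, r ≤ p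

lemma Adm.disj {r : ℕ} {E : Fin r → Finset ℕ} (h : Adm r E) {i j : Fin r} (hij : i ≠ j) :
    Disjoint (E i) (E j) := by
  rw [Finset.disjoint_left]
  intro p hpi hpj
  rcases lt_or_gt_of_ne hij with hlt | hlt
  · exact lt_irrefl p (h.1 i j hlt p hpi p hpj)
  · exact lt_irrefl p (h.1 j i hlt p hpj p hpi)

open Finsupp in
/-- The hierarchy computing the minimal Tsirelson norm. -/
noncomputable def KK : ℕ → (ℕ →₀ ℝ) → ℝ
  | 0 => fun y => sSup (Set.range fun i => |y i|)
  | (m+1) => fun y => max (KK m y)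
      (sSup {v | ∃ r : ℕ, ∃ E : Fin r → Finset ℕ, Adm r E ∧
        v = (1/2 : ℝ) * ∑ i, KK m (y.filter (· ∈ E i))})

lemma KK_zero_def (y : ℕ →₀ ℝ) : KK 0 y = sSup (Set.range fun i => |y i|) := rfl

lemma KK_succ_def (m : ℕ) (y : ℕ →₀ ℝ) : KK (m+1) y = max (KK m y)
    (sSup {v | ∃ r : ℕ, ∃ E : Fin r → Finset ℕ, Adm r E ∧
      v = (1/2 : ℝ) * ∑ i, KK m (y.filter (· ∈ E i))}) := rfl

lemma filter_abs_le (y : ℕ →₀ ℝ) (p : ℕ → Prop) [DecidablePred p] (j : ℕ) :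
    |(y.filter p) j| ≤ |y j| := by
  rw [Finsupp.filter_apply]
  split
  · exact le_refl _
  · rw [abs_zero]; exact abs_nonneg _

lemma l1_filter_sum {r : ℕ} {E : Fin r → Finset ℕ} (hE : Adm r E) (y : ℕ →₀ ℝ) :
    ∑ i, l1 (y.filter (· ∈ E i)) ≤ l1 y := by
  classical
  have key : ∀ i : Fin r, l1 (y.filter (· ∈ E i)) = ∑ j ∈ y.support.filter (· ∈ E i), |y j| := by
    intro i
    rw [l1, Finsupp.support_filter]
    refine Finset.sum_congr rfl fun j hj => ?_
    rw [Finset.mem_filter] at hj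
    rw [Finsupp.filter_apply, if_pos hj.2]
  calc ∑ i, l1 (y.filter (· ∈ E i)) = ∑ i, ∑ j ∈ y.support.filter (· ∈ E i), |y j| := by
        exact Finset.sum_congr rfl fun i _ => key i
    _ = ∑ j ∈ Finset.univ.biUnion (fun i : Fin r => y.support.filter (· ∈ E i)), |y j| := by
        rw [Finset.sum_biUnion]
        intro i _ j _ hij
        simp only [Function.onFun]
        rw [Finset.disjoint_left]
        intro p hp hq
        rw [Finset.mem_filter] at hp hq
        exact (Finset.disjoint_left.mp (hE.disj hij)) hp.2 hq.2
    _ ≤ l1 y := by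
        refine Finset.sum_le_sum_of_subset_of_nonneg ?_ (fun j _ _ => abs_nonneg _)
        intro j hj
        rw [Finset.mem_biUnion] at hj
        obtain ⟨i, _, hji⟩ := hj
        exact (Finset.mem_filter.mp hji).1

lemma bdd_range_abs (y : ℕ →₀ ℝ) : BddAbove (Set.range fun i => |y i|) := by
  refine ⟨l1 y, ?_⟩
  rintro v ⟨i, rfl⟩
  exact abs_le_l1 y i

lemma KK_le_l1 : ∀ m y, KK m y ≤ l1 y := by
  intro m
  induction m with
  | zero =>
    intro y
    refine csSup_le ⟨|y 0|, ⟨0, rfl⟩⟩ ?_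
    rintro v ⟨i, rfl⟩
    exact abs_le_l1 y i
  | succ m ih =>
    intro y
    refine max_le (ih y) (Real.sSup_le ?_ (l1_nonneg y))
    rintro v ⟨r, E, hE, rfl⟩
    calc (1/2 : ℝ) * ∑ i, KK m (y.filter (· ∈ E i))
        ≤ (1/2 : ℝ) * ∑ i, l1 (y.filter (· ∈ E i)) := by
          refine mul_le_mul_of_nonneg_left ?_ (by norm_num)
          exact Finset.sum_le_sum fun i _ => ih _
      _ ≤ (1/2 : ℝ) * l1 y := by
          refine mul_le_mul_of_nonneg_left (l1_filter_sum hE y) (by norm_num)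
      _ ≤ l1 y := by
          have := l1_nonneg y
          linarith

lemma KK_valset_bdd (m : ℕ) (y : ℕ →₀ ℝ) :
    BddAbove {v | ∃ r : ℕ, ∃ E : Fin r → Finset ℕ, Adm r E ∧
      v = (1/2 : ℝ) * ∑ i, KK m (y.filter (· ∈ E i))} := by
  refine ⟨l1 y, ?_⟩
  rintro v ⟨r, E, hE, rfl⟩
  calc (1/2 : ℝ) * ∑ i, KK m (y.filter (· ∈ E i))
      ≤ (1/2 : ℝ) * ∑ i, l1 (y.filter (· ∈ E i)) := by
        refine mul_le_mul_of_nonneg_left ?_ (by norm_num)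
        exact Finset.sum_le_sum fun i _ => KK_le_l1 m _
    _ ≤ (1/2 : ℝ) * l1 y := mul_le_mul_of_nonneg_left (l1_filter_sum hE y) (by norm_num)
    _ ≤ l1 y := by have := l1_nonneg y; linarith

lemma abs_le_KK0 (y : ℕ →₀ ℝ) (i : ℕ) : |y i| ≤ KK 0 y :=
  le_csSup (bdd_range_abs y) ⟨i, rfl⟩

lemma KK_nonneg (m : ℕ) (y : ℕ →₀ ℝ) : 0 ≤ KK m y := by
  induction m with
  | zero => exact (abs_nonneg (y 0)).trans (abs_le_KK0 y 0)
  | succ m ih => exact ih.trans (le_max_left _ _)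

lemma KK_mono_succ (m : ℕ) (y : ℕ →₀ ℝ) : KK m y ≤ KK (m+1) y := le_max_left _ _

lemma KK0_le (m : ℕ) (y : ℕ →₀ ℝ) : KK 0 y ≤ KK m y := by
  induction m with
  | zero => exact le_refl _
  | succ m ih => exact ih.trans (KK_mono_succ m y)

lemma abs_le_KK (m : ℕ) (y : ℕ →₀ ℝ) (i : ℕ) : |y i| ≤ KK m y :=
  (abs_le_KK0 y i).trans (KK0_le m y)

lemma KK_valset_le (m : ℕ) (y : ℕ →₀ ℝ) {r : ℕ} {E : Fin r → Finset ℕ} (hE : Adm r E) :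
    (1/2 : ℝ) * ∑ i, KK m (y.filter (· ∈ E i)) ≤ KK (m+1) y := by
  refine le_trans (le_csSup (KK_valset_bdd m y) ⟨r, E, hE, rfl⟩) (le_max_right _ _)

lemma filter_finset_sum {α : Type*} (s : Finset α) (f : α → (ℕ →₀ ℝ)) (p : ℕ → Prop)
    [DecidablePred p] : (∑ k ∈ s, f k).filter p = ∑ k ∈ s, (f k).filter p := by
  ext j
  rw [Finsupp.filter_apply, Finsupp.finset_sum_apply, Finsupp.finset_sum_apply]
  split
  · exact Finset.sum_congr rfl fun k _ => by
      rw [Finsupp.filter_apply]; split <;> tauto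
  · rename_i hpj
    symm
    refine Finset.sum_eq_zero fun k _ => ?_
    rw [Finsupp.filter_apply, if_neg hpj]

lemma KK_zero_vec (m : ℕ) : KK m 0 = 0 := by
  induction m with
  | zero =>
    have h : (Set.range fun i : ℕ => |(0 : ℕ →₀ ℝ) i|) = {0} := by
      ext v
      constructor
      · rintro ⟨i, rfl⟩; simp
      · rintro rfl; exact ⟨0, by simp⟩
    rw [KK_zero_def, h, csSup_singleton]
  | succ m ih =>
    rw [KK_succ_def, ih]
    refine max_eq_left ?_
    refine Real.sSup_le ?_ (le_refl 0)
    rintro v ⟨r, E, hE, rfl⟩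
    have h0 : ∀ i : Fin r, ((0 : ℕ →₀ ℝ).filter (· ∈ E i)) = 0 := fun i => by
      ext j; rw [Finsupp.filter_apply]; split <;> simp
    rw [Finset.sum_congr rfl fun i _ => by rw [h0 i, ih]]
    simp

lemma KK_add (m : ℕ) : ∀ x y : ℕ →₀ ℝ, KK m (x + y) ≤ KK m x + KK m y := by
  induction m with
  | zero =>
    intro x y
    refine csSup_le ⟨|(x+y) 0|, ⟨0, rfl⟩⟩ ?_
    rintro v ⟨i, rfl⟩
    calc |(x + y) i| ≤ |x i| + |y i| := by rw [Finsupp.add_apply]; exact abs_add_le _ _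
      _ ≤ KK 0 x + KK 0 y := add_le_add (abs_le_KK0 x i) (abs_le_KK0 y i)
  | succ m ih =>
    intro x y
    refine max_le ((ih x y).trans (add_le_add (KK_mono_succ m x) (KK_mono_succ m y)))
      (Real.sSup_le ?_ (add_nonneg (KK_nonneg _ _) (KK_nonneg _ _)))
    rintro v ⟨r, E, hE, rfl⟩
    classical
    calc (1/2 : ℝ) * ∑ i, KK m ((x + y).filter (· ∈ E i))
        ≤ (1/2 : ℝ) * ∑ i, (KK m (x.filter (· ∈ E i)) + KK m (y.filter (· ∈ E i))) := by
          refine mul_le_mul_of_nonneg_left (Finset.sum_le_sum fun i _ => ?_) (by norm_num)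
          rw [Finsupp.filter_add]
          exact ih _ _
      _ = (1/2 : ℝ) * ∑ i, KK m (x.filter (· ∈ E i))
          + (1/2 : ℝ) * ∑ i, KK m (y.filter (· ∈ E i)) := by
          rw [Finset.sum_add_distrib]; ring
      _ ≤ KK (m+1) x + KK (m+1) y :=
          add_le_add (KK_valset_le m x hE) (KK_valset_le m y hE)

lemma KK_sum_le {α : Type*} (m : ℕ) (s : Finset α) (f : α → (ℕ →₀ ℝ)) :
    KK m (∑ k ∈ s, f k) ≤ ∑ k ∈ s, KK m (f k) := by
  classical
  induction s using Finset.induction_on with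
  | empty => rw [Finset.sum_empty, Finset.sum_empty, KK_zero_vec]
  | @insert k s' hk ih =>
    rw [Finset.sum_insert hk, Finset.sum_insert hk]
    exact (KK_add m _ _).trans (add_le_add (le_refl _) ih)

lemma KK_smul_le (m : ℕ) : ∀ (c : ℝ) (y : ℕ →₀ ℝ), KK m (c • y) ≤ |c| * KK m y := by
  induction m with
  | zero =>
    intro c y
    refine csSup_le ⟨|(c • y) 0|, ⟨0, rfl⟩⟩ ?_
    rintro v ⟨i, rfl⟩
    calc |(c • y) i| = |c| * |y i| := by rw [Finsupp.smul_apply, smul_eq_mul, abs_mul]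
      _ ≤ |c| * KK 0 y := mul_le_mul_of_nonneg_left (abs_le_KK0 y i) (abs_nonneg c)
  | succ m ih =>
    intro c y
    refine max_le ((ih c y).trans (mul_le_mul_of_nonneg_left (KK_mono_succ m y) (abs_nonneg c)))
      (Real.sSup_le ?_ (mul_nonneg (abs_nonneg c) (KK_nonneg _ _)))
    rintro v ⟨r, E, hE, rfl⟩
    classical
    calc (1/2 : ℝ) * ∑ i, KK m ((c • y).filter (· ∈ E i))
        ≤ (1/2 : ℝ) * ∑ i, (|c| * KK m (y.filter (· ∈ E i))) := by
          refine mul_le_mul_of_nonneg_left (Finset.sum_le_sum fun i _ => ?_) (by norm_num)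
          rw [Finsupp.filter_smul]
          exact ih c _
      _ = |c| * ((1/2 : ℝ) * ∑ i, KK m (y.filter (· ∈ E i))) := by
          rw [← Finset.mul_sum]; ring
      _ ≤ |c| * KK (m+1) y :=
          mul_le_mul_of_nonneg_left (KK_valset_le m y hE) (abs_nonneg c)

lemma KK_smul (m : ℕ) (c : ℝ) (y : ℕ →₀ ℝ) : KK m (c • y) = |c| * KK m y := by
  rcases eq_or_ne c 0 with rfl | hc
  · rw [zero_smul, KK_zero_vec]; simp
  · refine le_antisymm (KK_smul_le m c y) ?_
    have h2 := KK_smul_le m c⁻¹ (c • y)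
    rw [inv_smul_smul₀ hc] at h2
    rw [abs_inv] at h2
    have hc' : (0:ℝ) < |c| := abs_pos.mpr hc
    calc |c| * KK m y ≤ |c| * (|c|⁻¹ * KK m (c • y)) :=
          mul_le_mul_of_nonneg_left h2 (abs_nonneg c)
      _ = KK m (c • y) := by field_simp

lemma support_filter_subset (y : ℕ →₀ ℝ) (p : ℕ → Prop) [DecidablePred p] :
    (y.filter p).support ⊆ y.support := by
  intro j hj
  rw [Finsupp.mem_support_iff] at hj ⊢
  rw [Finsupp.filter_apply] at hj
  intro h0
  rw [h0] at hj
  simp at hj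

lemma mem_of_mem_support_filter (y : ℕ →₀ ℝ) (p : ℕ → Prop) [DecidablePred p] (j : ℕ)
    (hj : j ∈ (y.filter p).support) : p j := by
  rw [Finsupp.mem_support_iff, Finsupp.filter_apply] at hj
  by_contra h
  rw [if_neg h] at hj
  exact hj rfl

lemma sum_filter_apply_abs_le {r : ℕ} {E : Fin r → Finset ℕ} (hE : Adm r E) (y : ℕ →₀ ℝ)
    (j : ℕ) : |(∑ i, y.filter (· ∈ E i)) j| ≤ |y j| := by
  classical
  rw [Finsupp.finset_sum_apply]
  by_cases h : ∃ i : Fin r, j ∈ E i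
  · obtain ⟨i₀, hi₀⟩ := h
    rw [Finset.sum_eq_single i₀]
    · rw [Finsupp.filter_apply, if_pos hi₀]
    · intro i _ hi
      rw [Finsupp.filter_apply]
      refine if_neg fun hji => ?_
      exact (Finset.disjoint_left.mp (hE.disj hi)) hji hi₀
    · intro hh
      exact absurd (Finset.mem_univ i₀) hh
  · push_neg at h
    rw [Finset.sum_eq_zero fun i _ => by rw [Finsupp.filter_apply, if_neg (h i)]]
    rw [abs_zero]
    exact abs_nonneg _

/-- The hierarchy is dominated by any minimal Tsirelson norm. -/
lemma KK_le_N {N : (ℕ →₀ ℝ) → ℝ} (hN : IsTsirelsonNorm N) : ∀ m y, KK m y ≤ N y := by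
  intro m
  induction m with
  | zero =>
    intro y
    refine csSup_le ⟨|y 0|, ⟨0, rfl⟩⟩ ?_
    rintro v ⟨i, rfl⟩
    exact hN.1.2.2.2.1 y i
  | succ m ih =>
    intro y
    refine max_le (ih y) (Real.sSup_le ?_ (hN.1.1 y))
    rintro v ⟨r, E, hE, rfl⟩
    classical
    calc (1/2 : ℝ) * ∑ i, KK m (y.filter (· ∈ E i))
        ≤ (1/2 : ℝ) * ∑ i, N (y.filter (· ∈ E i)) := by
          refine mul_le_mul_of_nonneg_left (Finset.sum_le_sum fun i _ => ih _) (by norm_num)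
      _ ≤ N (∑ i, y.filter (· ∈ E i)) := by
          refine hN.1.2.2.2.2 r (fun i => y.filter (· ∈ E i)) ?_ ?_
          · intro i j hij p hp q hq
            exact hE.1 i j hij p (mem_of_mem_support_filter y _ p hp)
              q (mem_of_mem_support_filter y _ q hq)
          · intro i p hp
            exact hE.2 i p (mem_of_mem_support_filter y _ p hp)
      _ ≤ N y := tsi_mono hN y _ (sum_filter_apply_abs_le hE y)

/-! ### The sharp condition with two blocks of `n` pieces -/

/-- Combination of two `Fin n`-tuples into a `Fin (2*n)`-tuple. -/
def combine {A : Type*} [Zero A] (n : ℕ) (f g : Fin n → A) : Fin (2 * n) → A :=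
  fun t => if h : (t : ℕ) < n then f ⟨t, h⟩ else g ⟨(t : ℕ) - n, by omega⟩

lemma combine_sum {A : Type*} [AddCommMonoid A] [Zero A] (n : ℕ) (f g : Fin n → A) :
    ∑ t, combine n f g t = ∑ i, f i + ∑ i, g i := by
  rw [← Equiv.sum_comp (finCongr (two_mul n)).symm (combine n f g), Fin.sum_univ_add]
  congr 1
  · refine Finset.sum_congr rfl fun i _ => ?_
    have hlt : (((finCongr (two_mul n)).symm (Fin.castAdd n i) : Fin (2*n)) : ℕ) = (i : ℕ) := by
      simp
    have hcond : (((finCongr (two_mul n)).symm (Fin.castAdd n i) : Fin (2*n)) : ℕ) < n := by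
      rw [hlt]; exact i.2
    calc combine n f g ((finCongr (two_mul n)).symm (Fin.castAdd n i))
        = f ⟨(((finCongr (two_mul n)).symm (Fin.castAdd n i) : Fin (2*n)) : ℕ), hcond⟩ :=
          dif_pos hcond
      _ = f i := congrArg f (Fin.ext hlt)
  · refine Finset.sum_congr rfl fun i _ => ?_
    have hval : (((finCongr (two_mul n)).symm (Fin.natAdd n i) : Fin (2*n)) : ℕ) = n + (i : ℕ) := by
      simp [Nat.add_comm]
    have hcond : ¬ ((((finCongr (two_mul n)).symm (Fin.natAdd n i) : Fin (2*n)) : ℕ) < n) := by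
      omega
    calc combine n f g ((finCongr (two_mul n)).symm (Fin.natAdd n i))
        = g ⟨(((finCongr (two_mul n)).symm (Fin.natAdd n i) : Fin (2*n)) : ℕ) - n, by omega⟩ :=
          dif_neg hcond
      _ = g i := congrArg g (Fin.ext (by show _ - n = (i : ℕ); rw [hval]; omega))

lemma sharp_two_blocks {Ns : (ℕ →₀ ℝ) → ℝ} (hNs : IsTsirelsonSharpNorm Ns)
    (n : ℕ) (f g : Fin n → (ℕ →₀ ℝ))
    (hff : ∀ i j : Fin n, i ≠ j → Disjoint (f i).support (f j).support)
    (hgg : ∀ i j : Fin n, i ≠ j → Disjoint (g i).support (g j).support)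
    (hfg : ∀ i j : Fin n, Disjoint (f i).support (g j).support)
    (hsf : ∀ i : Fin n, ∀ p ∈ (f i).support, n ≤ p)
    (hsg : ∀ i : Fin n, ∀ p ∈ (g i).support, n ≤ p) :
    ∑ i, Ns (f i) + ∑ i, Ns (g i) ≤ 2 * Ns (∑ i, f i + ∑ i, g i) := by
  have key := hNs.1.2.2.2.2 n (combine n f g) ?_ ?_
  · have h1 : ∑ t, Ns (combine n f g t) = ∑ i, Ns (f i) + ∑ i, Ns (g i) := by
      have : (fun t => Ns (combine n f g t)) = combine n (fun i => Ns (f i)) (fun i => Ns (g i)) := by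
        funext t
        rw [combine, combine]
        split <;> rfl
      rw [this, combine_sum]
    rw [h1, combine_sum] at key
    linarith
  · intro s t hst
    rw [combine, combine]
    by_cases h1 : (s : ℕ) < n <;> by_cases h2 : (t : ℕ) < n
    · rw [dif_pos h1, dif_pos h2]
      refine hff _ _ fun hh => hst ?_
      exact Fin.ext (Fin.mk.inj_iff.mp hh)
    · rw [dif_pos h1, dif_neg h2]
      exact hfg _ _
    · rw [dif_neg h1, dif_pos h2]
      exact (hfg _ _).symm
    · rw [dif_neg h1, dif_neg h2]
      refine hgg _ _ fun hh => hst ?_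
      have h3 : (s : ℕ) - n = (t : ℕ) - n := Fin.mk.inj_iff.mp hh
      refine Fin.ext ?_
      have hs2 := s.2
      have ht2 := t.2
      omega
  · intro t p hp
    rw [combine] at hp
    split at hp
    · exact hsf _ p hp
    · exact hsg _ p hp

/-! ### Atom sums -/

section Atoms

variable {M : ℕ} (x : Fin M → (ℕ →₀ ℝ)) (a : Fin M → ℕ) {N : (ℕ →₀ ℝ) → ℝ}

/-- The sum of weighted basis vectors at the positions `a k`, `k ∈ s`. -/
noncomputable def atomSum (N : (ℕ →₀ ℝ) → ℝ) (x : Fin M → (ℕ →₀ ℝ)) (a : Fin M → ℕ)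
    (s : Finset (Fin M)) : ℕ →₀ ℝ :=
  ∑ k ∈ s, Finsupp.single (a k) (N (x k))

lemma atomSum_support (s : Finset (Fin M)) :
    (atomSum N x a s).support ⊆ s.image a := by
  classical
  refine (Finsupp.support_finset_sum).trans ?_
  intro p hp
  rw [Finset.mem_biUnion] at hp
  obtain ⟨k, hk, hpk⟩ := hp
  have := Finsupp.support_single_subset hpk
  rw [Finset.mem_singleton] at this
  subst this
  exact Finset.mem_image_of_mem a hk

lemma atomSum_disjoint (hinj : Function.Injective a) {s t : Finset (Fin M)}
    (hst : Disjoint s t) :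
    Disjoint (atomSum N x a s).support (atomSum N x a t).support := by
  classical
  refine Finset.disjoint_left.mpr fun p hp hq => ?_
  have hp' := atomSum_support x a s hp
  have hq' := atomSum_support x a t hq
  rw [Finset.mem_image] at hp' hq'
  obtain ⟨k1, hk1, rfl⟩ := hp'
  obtain ⟨k2, hk2, hk⟩ := hq'
  have : k2 = k1 := hinj hk
  subst this
  exact (Finset.disjoint_left.mp hst) hk1 hk2

lemma atomSum_apply (N : (ℕ →₀ ℝ) → ℝ) (s : Finset (Fin M)) (j : ℕ) :
    atomSum N x a s j = ∑ k ∈ s, (if a k = j then N (x k) else 0) := by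
  classical
  rw [atomSum, Finsupp.finset_sum_apply]
  exact Finset.sum_congr rfl fun k _ => Finsupp.single_apply

/-- Sharp lower bound: a disjoint collection of atoms at large positions. -/
lemma sharp_atoms {Ns : (ℕ →₀ ℝ) → ℝ} (hNs : IsTsirelsonSharpNorm Ns)
    (hN0 : ∀ k, 0 ≤ N (x k)) (hinj : Function.Injective a)
    (s : Finset (Fin M)) (hcard : ∀ k ∈ s, s.card ≤ a k) :
    ∑ k ∈ s, N (x k) ≤ 2 * Ns (atomSum N x a s) := by
  classical
  set n := s.card with hn
  set e := s.equivFin with he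
  set f : Fin n → (ℕ →₀ ℝ) := fun t => Finsupp.single (a ((e.symm t) : Fin M)) (N (x ((e.symm t) : Fin M))) with hf
  have hsum : ∑ t, f t = atomSum N x a s := by
    rw [atomSum, ← Finset.sum_coe_sort s (fun k => Finsupp.single (a k) (N (x k)))]
    exact Equiv.sum_comp e.symm (fun k : s => Finsupp.single (a (k : Fin M)) (N (x (k : Fin M))))
  have key := sharp_two_blocks hNs n f (fun _ => 0) ?_ ?_ ?_ ?_ ?_
  · have h0 : ∑ i : Fin n, Ns ((0 : ℕ →₀ ℝ)) = 0 := by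
      rw [Finset.sum_congr rfl fun i _ => tsi_zero hNs.1.2.1]
      simp
    rw [h0, add_zero, hsum] at key
    have hNsum : ∑ i : Fin n, (0 : ℕ →₀ ℝ) = 0 := Finset.sum_const_zero
    rw [hNsum, add_zero] at key
    refine le_trans ?_ key
    have : ∑ k ∈ s, N (x k) = ∑ t : Fin n, N (x ((e.symm t) : Fin M)) := by
      rw [← Finset.sum_coe_sort s (fun k => N (x k))]
      exact (Equiv.sum_comp e.symm (fun k : s => N (x (k : Fin M)))).symm
    rw [this]
    refine Finset.sum_le_sum fun t _ => ?_
    have h1 := hNs.1.2.2.2.1 (f t) (a ((e.symm t) : Fin M))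
    rw [hf] at h1
    simp only [Finsupp.single_eq_same] at h1
    rw [abs_of_nonneg (hN0 _)] at h1
    exact h1
  · intro i j hij
    refine Finset.disjoint_left.mpr fun p hp hq => ?_
    have hp' := Finsupp.support_single_subset hp
    have hq' := Finsupp.support_single_subset hq
    rw [Finset.mem_singleton] at hp' hq'
    subst hp'
    have : ((e.symm j) : Fin M) = ((e.symm i) : Fin M) := hinj hq'.symm
    have h2 : e.symm j = e.symm i := Subtype.ext this
    exact hij (e.symm.injective h2).symm
  · intro i j hij
    simp
  · intro i j
    simp
  · intro t p hp
    have hp' := Finsupp.support_single_subset hp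
    rw [Finset.mem_singleton] at hp'
    subst hp'
    exact hcard _ (e.symm t).2
  · intro i p hp
    simp at hp

end Atoms

/-! ### The limit norm and its candidate property -/

section Kinf

/-- The limit of the hierarchy. -/
noncomputable def Kinf (y : ℕ →₀ ℝ) : ℝ := ⨆ m, KK m y

lemma KK_bddAbove (y : ℕ →₀ ℝ) : BddAbove (Set.range fun m => KK m y) := by
  refine ⟨l1 y, ?_⟩
  rintro v ⟨m, rfl⟩
  exact KK_le_l1 m y

lemma KK_le_Kinf (m : ℕ) (y : ℕ →₀ ℝ) : KK m y ≤ Kinf y :=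
  le_ciSup (KK_bddAbove y) m

lemma KK_monotone (y : ℕ →₀ ℝ) : Monotone (fun m => KK m y) :=
  monotone_nat_of_le_succ fun m => KK_mono_succ m y

lemma KK_tendsto (y : ℕ →₀ ℝ) : Tendsto (fun m => KK m y) atTop (nhds (Kinf y)) :=
  tendsto_atTop_ciSup (KK_monotone y) (KK_bddAbove y)

lemma Kinf_candidate : IsTsiCandidate Kinf := by
  refine ⟨?_, ?_, ?_, ?_, ?_⟩
  · intro y
    exact (KK_nonneg 0 y).trans (KK_le_Kinf 0 y)
  · intro c y
    have h1 : Tendsto (fun m => KK m (c • y)) atTop (nhds (Kinf (c • y))) := KK_tendsto _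
    have h2 : Tendsto (fun m => KK m (c • y)) atTop (nhds (|c| * Kinf y)) := by
      have : (fun m => KK m (c • y)) = fun m => |c| * KK m y := by
        funext m; exact KK_smul m c y
      rw [this]
      exact (KK_tendsto y).const_mul _
    exact tendsto_nhds_unique h1 h2
  · intro y z
    refine ciSup_le fun m => ?_
    exact (KK_add m y z).trans (add_le_add (KK_le_Kinf m y) (KK_le_Kinf m z))
  · intro y i
    exact (abs_le_KK 0 y i).trans (KK_le_Kinf 0 y)
  · intro n xs hsucc hsupp
    classical
    have hdisj : ∀ j k : Fin n, j ≠ k → Disjoint (xs j).support (xs k).support := by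
      intro j k hjk
      refine Finset.disjoint_left.mpr fun p hp hq => ?_
      rcases lt_or_gt_of_ne hjk with h | h
      · exact lt_irrefl p (hsucc j k h p hp p hq)
      · exact lt_irrefl p (hsucc k j h p hq p hp)
    have hAdm : Adm n (fun j => (xs j).support) := by
      constructor
      · intro i j hij p hp q hq
        exact hsucc i j hij p hp q hq
      · intro i p hp
        exact hsupp i p hp
    have hfilter : ∀ j : Fin n, (∑ k, xs k).filter (· ∈ (xs j).support) = xs j := by
      intro j
      ext p
      rw [Finsupp.filter_apply]
      by_cases hp : p ∈ (xs j).support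
      · rw [if_pos hp, Finsupp.finset_sum_apply]
        rw [Finset.sum_eq_single j]
        · intro k _ hkj
          by_contra hne
          exact (Finset.disjoint_left.mp (hdisj k j hkj)) (Finsupp.mem_support_iff.mpr hne) hp
        · intro hj
          exact absurd (Finset.mem_univ j) hj
      · rw [if_neg hp]
        exact (Finsupp.notMem_support_iff.mp hp).symm
    have key : ∀ m : ℕ, (1/2 : ℝ) * ∑ j, KK m (xs j) ≤ Kinf (∑ j, xs j) := by
      intro m
      have h1 := KK_valset_le m (∑ j, xs j) hAdm
      rw [Finset.sum_congr rfl fun j _ => by rw [hfilter j]] at h1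
      exact h1.trans (KK_le_Kinf (m+1) _)
    have hlim : Tendsto (fun m => (1/2 : ℝ) * ∑ j, KK m (xs j)) atTop
        (nhds ((1/2 : ℝ) * ∑ j, Kinf (xs j))) := by
      refine Tendsto.const_mul _ ?_
      exact tendsto_finset_sum _ fun j _ => KK_tendsto (xs j)
    exact le_of_tendsto hlim (Filter.Eventually.of_forall key)

end Kinf

/-! ### The main claim -/

lemma main_claim {N Ns : (ℕ →₀ ℝ) → ℝ} (hN : IsTsirelsonNorm N) (hNs : IsTsirelsonSharpNorm Ns) :
    ∀ (m M : ℕ) (x : Fin M → (ℕ →₀ ℝ)) (a : Fin M → ℕ),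
      Function.Injective a →
      (Pairwise fun j k => Disjoint (x j).support (x k).support) →
      (∀ k, ∀ i ∈ (x k).support, i ≤ a k) →
      KK m (∑ k, x k) ≤ 4 * Ns (atomSum N x a Finset.univ) := by
  intro m
  induction m with
  | zero =>
    intro M x a hinj hdisj hbound
    refine csSup_le ⟨|(∑ k, x k) 0|, ⟨0, rfl⟩⟩ ?_
    rintro v ⟨i, rfl⟩
    show |(∑ k, x k) i| ≤ 4 * Ns (atomSum N x a Finset.univ)
    by_cases h : (∑ k, x k) i = 0
    · rw [h, abs_zero]
      exact mul_nonneg (by norm_num) (hNs.1.1 _)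
    · rw [Finsupp.finset_sum_apply] at h
      obtain ⟨k₀, _, hk₀⟩ := Finset.exists_ne_zero_of_sum_ne_zero h
      have heq : (∑ k, x k) i = x k₀ i := by
        rw [Finsupp.finset_sum_apply]
        refine Finset.sum_eq_single k₀ ?_ ?_
        · intro k _ hkk
          by_contra hne
          exact (Finset.disjoint_left.mp (hdisj hkk)) (Finsupp.mem_support_iff.mpr hne)
            (Finsupp.mem_support_iff.mpr hk₀)
        · intro hh; exact absurd (Finset.mem_univ k₀) hh
      have h1 : |(∑ k, x k) i| ≤ N (x k₀) := by
        rw [heq]; exact hN.1.2.2.2.1 (x k₀) i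
      have h2 : N (x k₀) ≤ Ns (atomSum N x a Finset.univ) := by
        have hval : atomSum N x a Finset.univ (a k₀) = N (x k₀) := by
          rw [atomSum_apply]
          rw [Finset.sum_eq_single k₀]
          · rw [if_pos rfl]
          · intro k _ hkk
            exact if_neg fun hak => hkk (hinj hak)
          · intro hh; exact absurd (Finset.mem_univ k₀) hh
        have := hNs.1.2.2.2.1 (atomSum N x a Finset.univ) (a k₀)
        rw [hval, abs_of_nonneg (hN.1.1 _)] at this
        exact this
      have h3 : 0 ≤ Ns (atomSum N x a Finset.univ) := hNs.1.1 _
      linarith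
  | succ m IH =>
    intro M x a hinj hdisj hbound
    rw [KK_succ_def]
    refine max_le (IH M x a hinj hdisj hbound) ?_
    refine Real.sSup_le ?_ (mul_nonneg (by norm_num) (hNs.1.1 _))
    rintro v ⟨r, E, hE, rfl⟩
    classical
    rcases Nat.eq_zero_or_pos r with hr0 | hrpos
    · subst hr0
      rw [Finset.univ_eq_empty, Finset.sum_empty, mul_zero]
      exact mul_nonneg (by norm_num) (hNs.1.1 _)
    -- notation
    set u : ℕ →₀ ℝ := ∑ k, x k with hu
    set I : Fin M → Finset (Fin r) :=
      fun k => Finset.univ.filter (fun i => ((x k).support ∩ E i).Nonempty) with hI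
    have hImem : ∀ k i, i ∈ I k ↔ ((x k).support ∩ E i).Nonempty := by
      intro k i; simp [hI]
    set Dset : Fin r → Finset (Fin M) :=
      fun i => Finset.univ.filter (fun k => I k = {i}) with hDdef
    have hDmem : ∀ i k, k ∈ Dset i ↔ I k = {i} := by
      intro i k; simp [hDdef]
    set Sset : Finset (Fin M) := Finset.univ.filter (fun k => 2 ≤ (I k).card) with hSdef
    have hSmem : ∀ k, k ∈ Sset ↔ 2 ≤ (I k).card := by
      intro k; simp [hSdef]
    set iOne : Fin M → Fin r :=
      fun k => if h : (I k).Nonempty then (I k).min' h else ⟨0, hrpos⟩ with hiOnedef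
    have hiOne_mem : ∀ k, (I k).Nonempty → iOne k ∈ I k := by
      intro k hk
      simp only [hiOnedef]
      rw [dif_pos hk]
      exact Finset.min'_mem _ hk
    have herase : ∀ k, 2 ≤ (I k).card → ((I k).erase (iOne k)).Nonempty := by
      intro k hk
      have hne : (I k).Nonempty := Finset.card_pos.mp (by omega)
      refine Finset.card_pos.mp ?_
      rw [Finset.card_erase_of_mem (hiOne_mem k hne)]
      omega
    set iTwo : Fin M → Fin r :=
      fun k => if h : ((I k).erase (iOne k)).Nonempty then ((I k).erase (iOne k)).min' h
        else ⟨0, hrpos⟩ with hiTwodef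
    have hiTwo_erase : ∀ k, 2 ≤ (I k).card → iTwo k ∈ (I k).erase (iOne k) := by
      intro k hk
      simp only [hiTwodef]
      rw [dif_pos (herase k hk)]
      exact Finset.min'_mem _ _
    have hiTwo_mem : ∀ k, 2 ≤ (I k).card → iTwo k ∈ I k :=
      fun k hk => Finset.mem_of_mem_erase (hiTwo_erase k hk)
    have hiOne_lt_iTwo : ∀ k, 2 ≤ (I k).card → iOne k < iTwo k := by
      intro k hk
      have hne : (I k).Nonempty := Finset.card_pos.mp (by omega)
      have h1 : iOne k ≤ iTwo k := by
        have : iOne k = (I k).min' hne := by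
          simp only [hiOnedef]; rw [dif_pos hne]
        rw [this]
        exact Finset.min'_le _ _ (hiTwo_mem k hk)
      have h2 : iTwo k ≠ iOne k := Finset.ne_of_mem_erase (hiTwo_erase k hk)
      exact lt_of_le_of_ne h1 (fun hh => h2 hh.symm)
    set PSet : Fin r → Finset (Fin M) := fun i => Sset.filter (fun k => iTwo k = i) with hPdef
    have hPmem : ∀ i k, k ∈ PSet i ↔ (2 ≤ (I k).card ∧ iTwo k = i) := by
      intro i k
      simp [hPdef, Finset.mem_filter, hSmem]
    -- position lower bound
    have hra : ∀ k, (I k).Nonempty → r ≤ a k := by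
      intro k hk
      obtain ⟨i, hi⟩ := hk
      obtain ⟨q, hq⟩ := (hImem k i).mp hi
      rw [Finset.mem_inter] at hq
      exact le_trans (hE.2 i q hq.2) (hbound k q hq.1)
    -- the element j1
    set j1 : Fin M → ℕ := fun k =>
      if h : ((x k).support ∩ E (iOne k)).Nonempty then h.choose else 0 with hj1def
    have hj1_mem : ∀ k, 2 ≤ (I k).card → j1 k ∈ (x k).support ∩ E (iOne k) := by
      intro k hk
      have hne : (I k).Nonempty := Finset.card_pos.mp (by omega)
      have h1 : ((x k).support ∩ E (iOne k)).Nonempty := (hImem k _).mp (hiOne_mem k hne)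
      simp only [hj1def]
      rw [dif_pos h1]
      exact h1.choose_spec
    -- the counting lemma
    have hcount : ∀ i : Fin r, ∀ k ∈ PSet i, (PSet i).card ≤ a k := by
      intro i k hk
      obtain ⟨hk2, hki⟩ := (hPmem i k).mp hk
      obtain ⟨j2, hj2⟩ := (hImem k (iTwo k)).mp (hiTwo_mem k hk2)
      rw [Finset.mem_inter] at hj2
      have hj2a : j2 ≤ a k := hbound k j2 hj2.1
      have hcard : (PSet i).card ≤ (Finset.Ico r j2).card := by
        refine Finset.card_le_card_of_injOn j1 ?_ ?_
        · intro k' hk'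
          obtain ⟨hk'2, hk'i⟩ := (hPmem i k').mp hk'
          have hmem := hj1_mem k' hk'2
          rw [Finset.mem_inter] at hmem
          rw [Finset.mem_coe, Finset.mem_Ico]
          constructor
          · exact hE.2 (iOne k') (j1 k') hmem.2
          · have hlt : iOne k' < i := by
              rw [← hk'i]
              exact hiOne_lt_iTwo k' hk'2
            have := hE.1 (iOne k') i hlt (j1 k') hmem.2 j2 ?_
            · exact this
            · rw [← hki]; exact hj2.2
        · intro k1 hk1 k2 hk2' hj
          rw [Finset.mem_coe] at hk1 hk2'
          obtain ⟨hk12, _⟩ := (hPmem i k1).mp hk1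
          obtain ⟨hk22, _⟩ := (hPmem i k2).mp hk2'
          by_contra hne
          have hm1 := (hj1_mem k1 hk12)
          have hm2 := (hj1_mem k2 hk22)
          rw [Finset.mem_inter] at hm1 hm2
          exact (Finset.disjoint_left.mp (hdisj hne)) hm1.1 (hj ▸ hm2.1)
      rw [Nat.card_Ico] at hcard
      omega
    -- pieces
    set W : Fin r → (ℕ →₀ ℝ) := fun i => atomSum N x a (Dset i) with hWdef
    set U : Fin r → (ℕ →₀ ℝ) := fun i => atomSum N x a (PSet i) with hUdef
    -- set disjointness
    have hDD : ∀ i j : Fin r, i ≠ j → Disjoint (Dset i) (Dset j) := by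
      intro i j hij
      refine Finset.disjoint_left.mpr fun k hki hkj => ?_
      rw [hDmem] at hki hkj
      rw [hki] at hkj
      exact hij (Finset.singleton_injective hkj)
    have hPP : ∀ i j : Fin r, i ≠ j → Disjoint (PSet i) (PSet j) := by
      intro i j hij
      refine Finset.disjoint_left.mpr fun k hki hkj => ?_
      obtain ⟨_, h1⟩ := (hPmem i k).mp hki
      obtain ⟨_, h2⟩ := (hPmem j k).mp hkj
      exact hij (h1 ▸ h2 ▸ rfl)
    have hDP : ∀ i j : Fin r, Disjoint (Dset i) (PSet j) := by
      intro i j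
      refine Finset.disjoint_left.mpr fun k hki hkj => ?_
      obtain ⟨h2, _⟩ := (hPmem j k).mp hkj
      have h1 := (hDmem i k).mp hki
      rw [h1, Finset.card_singleton] at h2
      omega
    have hDS : ∀ i : Fin r, Disjoint (Dset i) Sset := by
      intro i
      refine Finset.disjoint_left.mpr fun k hki hkS => ?_
      have h2 := (hSmem k).mp hkS
      have h1 := (hDmem i k).mp hki
      rw [h1, Finset.card_singleton] at h2
      omega
    -- support positions
    have hWsupp : ∀ i : Fin r, ∀ p ∈ (W i).support, r ≤ p := by
      intro i p hp
      have := atomSum_support x a (Dset i) hp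
      rw [Finset.mem_image] at this
      obtain ⟨k, hk, rfl⟩ := this
      refine hra k ?_
      rw [(hDmem i k).mp hk]
      exact ⟨i, Finset.mem_singleton_self i⟩
    have hUsupp : ∀ i : Fin r, ∀ p ∈ (U i).support, r ≤ p := by
      intro i p hp
      have := atomSum_support x a (PSet i) hp
      rw [Finset.mem_image] at this
      obtain ⟨k, hk, rfl⟩ := this
      obtain ⟨hk2, _⟩ := (hPmem i k).mp hk
      exact hra k (Finset.card_pos.mp (by omega))
    -- decomposition of u over E i
    have hzero : ∀ i : Fin r, ∀ k, k ∉ Dset i ∪ Sset → (x k).filter (· ∈ E i) = 0 := by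
      intro i k hk
      rw [Finset.mem_union, hDmem, hSmem] at hk
      push_neg at hk
      have hnotin : i ∉ I k := by
        intro hin
        rcases Nat.lt_or_ge (I k).card 2 with hlt | hge
        · have hpos : 0 < (I k).card := Finset.card_pos.mpr ⟨i, hin⟩
          have hone : (I k).card = 1 := by omega
          obtain ⟨b, hb⟩ := Finset.card_eq_one.mp hone
          rw [hb] at hin
          rw [Finset.mem_singleton] at hin
          exact hk.1 (by rw [hb, hin])
        · omega
      rw [hImem] at hnotin
      ext j
      rw [Finsupp.filter_apply]
      split
      · rename_i hj
        by_contra hne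
        exact hnotin ⟨j, Finset.mem_inter.mpr ⟨Finsupp.mem_support_iff.mpr
          (by simpa using hne), hj⟩⟩
      · rfl
    have hsplit : ∀ i : Fin r, u.filter (· ∈ E i)
        = (∑ k ∈ Dset i, (x k).filter (· ∈ E i)) + (∑ k ∈ Sset, (x k).filter (· ∈ E i)) := by
      intro i
      rw [hu, filter_finset_sum]
      rw [← Finset.sum_union (hDS i)]
      symm
      refine Finset.sum_subset (Finset.subset_univ _) ?_
      intro k _ hk
      exact hzero i k hk
    -- main chain
    have step1 : ∀ i : Fin r, KK m (u.filter (· ∈ E i))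
        ≤ 4 * Ns (W i) + ∑ k ∈ Sset, KK m ((x k).filter (· ∈ E i)) := by
      intro i
      rw [hsplit i]
      refine (KK_add m _ _).trans (add_le_add ?_ (KK_sum_le m _ _))
      set x' : Fin M → (ℕ →₀ ℝ) :=
        fun k => if k ∈ Dset i then (x k).filter (· ∈ E i) else 0 with hx'def
      have hsub : ∀ k, (x' k).support ⊆ (x k).support := by
        intro k
        simp only [hx'def]
        split
        · exact support_filter_subset _ _
        · simp
      have hsum' : ∑ k ∈ Dset i, (x k).filter (· ∈ E i) = ∑ k, x' k := by
        simp only [hx'def]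
        rw [Finset.sum_ite_mem]
        rw [Finset.univ_inter]
      have hIH := IH M x' a hinj ?_ ?_
      rotate_left
      · intro j k hjk
        exact Finset.disjoint_of_subset_left (hsub j)
          (Finset.disjoint_of_subset_right (hsub k) (hdisj hjk))
      · intro k p hp
        exact hbound k p (hsub k hp)
      rw [hsum']
      refine hIH.trans (mul_le_mul_of_nonneg_left ?_ (by norm_num))
      -- Ns (atomSum N x' a univ) ≤ Ns (W i)
      refine sharp_mono hNs (W i) _ fun j => ?_
      have hZnn : 0 ≤ atomSum N x' a Finset.univ j := by
        rw [atomSum_apply]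
        refine Finset.sum_nonneg fun k _ => ?_
        split
        · exact hN.1.1 _
        · exact le_refl 0
      have hWnn : 0 ≤ W i j := by
        rw [hWdef, atomSum_apply]
        refine Finset.sum_nonneg fun k _ => ?_
        split
        · exact hN.1.1 _
        · exact le_refl 0
      rw [abs_of_nonneg hZnn, abs_of_nonneg hWnn]
      rw [atomSum_apply, hWdef, atomSum_apply]
      have hz' : ∀ k ∈ Finset.univ, k ∉ Dset i →
          (if a k = j then N (x' k) else 0) = 0 := by
        intro k _ hk
        have : x' k = 0 := by simp only [hx'def]; rw [if_neg hk]
        rw [this, tsi_zero hN.1.2.1]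
        split <;> rfl
      rw [← Finset.sum_subset (Finset.subset_univ (Dset i)) hz']
      refine Finset.sum_le_sum fun k hk => ?_
      have hxk : x' k = (x k).filter (· ∈ E i) := by
        simp only [hx'def]; rw [if_pos hk]
      split
      · rw [hxk]
        exact tsi_mono hN (x k) _ (filter_abs_le (x k) _)
      · exact le_refl 0
    calc (1/2 : ℝ) * ∑ i, KK m (u.filter (· ∈ E i))
        ≤ (1/2 : ℝ) * ∑ i, (4 * Ns (W i) + ∑ k ∈ Sset, KK m ((x k).filter (· ∈ E i))) := by
          exact mul_le_mul_of_nonneg_left (Finset.sum_le_sum fun i _ => step1 i) (by norm_num)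
      _ = 2 * ∑ i, Ns (W i) + ∑ k ∈ Sset, ((1/2 : ℝ) * ∑ i, KK m ((x k).filter (· ∈ E i))) := by
          rw [Finset.sum_add_distrib, mul_add]
          congr 1
          · rw [← Finset.mul_sum]; ring
          · rw [Finset.sum_comm, Finset.mul_sum]
      _ ≤ 2 * ∑ i, Ns (W i) + ∑ k ∈ Sset, N (x k) := by
          refine add_le_add (le_refl _) (Finset.sum_le_sum fun k _ => ?_)
          exact (KK_valset_le m (x k) hE).trans (KK_le_N hN (m+1) (x k))
      _ = 2 * ∑ i, Ns (W i) + ∑ i, ∑ k ∈ PSet i, N (x k) := by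
          congr 1
          exact (Finset.sum_fiberwise Sset iTwo (fun k => N (x k))).symm
      _ ≤ 2 * ∑ i, Ns (W i) + ∑ i, 2 * Ns (U i) := by
          refine add_le_add (le_refl _) (Finset.sum_le_sum fun i _ => ?_)
          exact sharp_atoms x a hNs (fun k => hN.1.1 _) hinj (PSet i) (hcount i)
      _ = 2 * (∑ i, Ns (W i) + ∑ i, Ns (U i)) := by
          rw [← Finset.mul_sum]; ring
      _ ≤ 2 * (2 * Ns (∑ i, W i + ∑ i, U i)) := by
          refine mul_le_mul_of_nonneg_left ?_ (by norm_num)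
          refine sharp_two_blocks hNs r W U ?_ ?_ ?_ hWsupp hUsupp
          · intro i j hij
            exact atomSum_disjoint x a hinj (hDD i j hij)
          · intro i j hij
            exact atomSum_disjoint x a hinj (hPP i j hij)
          · intro i j
            exact atomSum_disjoint x a hinj (hDP i j)
      _ ≤ 4 * Ns (atomSum N x a Finset.univ) := by
          have hm : Ns (∑ i, W i + ∑ i, U i) ≤ Ns (atomSum N x a Finset.univ) := by
            refine sharp_mono hNs _ _ fun j => ?_
            have hterm : ∀ k, 0 ≤ (if a k = j then N (x k) else 0) := by
              intro k; split
              · exact hN.1.1 _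
              · exact le_refl 0
            have hRval : (∑ i, W i + ∑ i, U i) j
                = (∑ i, ∑ k ∈ Dset i, (if a k = j then N (x k) else 0))
                  + (∑ i, ∑ k ∈ PSet i, (if a k = j then N (x k) else 0)) := by
              rw [Finsupp.add_apply, Finsupp.finset_sum_apply, Finsupp.finset_sum_apply]
              congr 1
              · refine Finset.sum_congr rfl fun i _ => ?_
                rw [hWdef, atomSum_apply]
              · refine Finset.sum_congr rfl fun i _ => ?_
                rw [hUdef, atomSum_apply]
            have hVval : atomSum N x a Finset.univ j
                = ∑ k, (if a k = j then N (x k) else 0) := atomSum_apply x a N _ j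
            have hRnn : 0 ≤ (∑ i, W i + ∑ i, U i) j := by
              rw [hRval]
              refine add_nonneg ?_ ?_ <;>
                exact Finset.sum_nonneg fun i _ => Finset.sum_nonneg fun k _ => hterm k
            have hVnn : 0 ≤ atomSum N x a Finset.univ j := by
              rw [hVval]
              exact Finset.sum_nonneg fun k _ => hterm k
            rw [abs_of_nonneg hRnn, abs_of_nonneg hVnn, hRval, hVval]
            have hDb : (∑ i, ∑ k ∈ Dset i, (if a k = j then N (x k) else 0))
                = ∑ k ∈ Finset.univ.biUnion Dset, (if a k = j then N (x k) else 0) := by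
              rw [Finset.sum_biUnion]
              intro i _ i' _ hii'
              exact hDD i i' hii'
            have hPb : (∑ i, ∑ k ∈ PSet i, (if a k = j then N (x k) else 0))
                = ∑ k ∈ Finset.univ.biUnion PSet, (if a k = j then N (x k) else 0) := by
              rw [Finset.sum_biUnion]
              intro i _ i' _ hii'
              exact hPP i i' hii'
            rw [hDb, hPb, ← Finset.sum_union ?_]
            · refine Finset.sum_le_sum_of_subset_of_nonneg (Finset.subset_univ _)
                fun k _ _ => hterm k
            · refine Finset.disjoint_left.mpr fun k hk1 hk2 => ?_
              rw [Finset.mem_biUnion] at hk1 hk2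
              obtain ⟨i, _, hki⟩ := hk1
              obtain ⟨i', _, hki'⟩ := hk2
              exact (Finset.disjoint_left.mp (hDP i i')) hki hki'
          have h0 := hNs.1.1 (∑ i, W i + ∑ i, U i)
          linarith

end Aux

/-- Lemma 5.11. If `x 1, …, x N` are pairwise disjointly supported vectors
in `c₀₀` and `a k = max supp (x k)`, then
`‖Σ x k‖_T ≤ 4 ‖Σ ‖x k‖_T e_{a k}‖_T^#`. -/
theorem statement18 (N Ns : (ℕ →₀ ℝ) → ℝ)
    (hN : IsTsirelsonNorm N) (hNs : IsTsirelsonSharpNorm Ns)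
    (M : ℕ) (x : Fin M → (ℕ →₀ ℝ))
    (hdisj : Pairwise fun j k => Disjoint (x j).support (x k).support)
    (a : Fin M → ℕ)
    (ha : ∀ k, a k ∈ (x k).support ∧ ∀ i ∈ (x k).support, i ≤ a k) :
    N (∑ k, x k) ≤ 4 * Ns (∑ k, Finsupp.single (a k) (N (x k))) := by
  have hinj : Function.Injective a := by
    intro k k' h
    by_contra hne
    have h1 := (ha k).1
    have h2 := (ha k').1
    rw [← h] at h2
    exact (Finset.disjoint_left.mp (hdisj hne)) h1 h2
  have hbound : ∀ k, ∀ i ∈ (x k).support, i ≤ a k := fun k => (ha k).2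
  have h1 : N (∑ k, x k) ≤ Kinf (∑ k, x k) := hN.2 Kinf Kinf_candidate _
  have h2 : Kinf (∑ k, x k) ≤ 4 * Ns (∑ k, Finsupp.single (a k) (N (x k))) := by
    refine ciSup_le fun m => ?_
    exact main_claim hN hNs m M x a hinj hdisj hbound
  linarith

end CK
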